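/- Let Y ⊆ ω^ω be such that for every y ∈ ω^ω the set {x ∈ Y : x(n) ≤ y(n) for all n} is at most countable, let ∞ be a point not in Y, and let X = {∞} ∪ Y carry the topology generated by the sets {y} for y ∈ Y together with the sets X \ D for all subsets D ⊆ Y that are closed and discrete in ω^ω. Then every compact subset of X is at most countable. -/

import Mathlib

open Cardinal Set Topology

universe u

def FunctionallyHausdorff (X : Type u) [TopologicalSpace X] : Prop :=
  ∀ x y : X, x ≠ y → ∃ f : X → unitInterval, Continuous f ∧ f x = 0 ∧ f y = 1

def IsCechComplete (X : Type u) [TopologicalSpace X] : Prop :=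
  ∃ (K : Type u) (_ : TopologicalSpace K) (e : X → K),
    CompactSpace K ∧ T2Space K ∧ IsEmbedding e ∧ DenseRange e ∧ IsGδ (Set.range e)

noncomputable def lindelofNumber (X : Type u) [TopologicalSpace X] : Cardinal.{u} :=
  sInf {κ : Cardinal.{u} | ℵ₀ ≤ κ ∧ ∀ U : Set (Set X), (∀ u ∈ U, IsOpen u) → ⋃₀ U = Set.univ →
    ∃ V ⊆ U, #↥V ≤ κ ∧ ⋃₀ V = Set.univ}

noncomputable def pseudocharacter (X : Type u) [TopologicalSpace X] : Cardinal.{u} :=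
  sInf {κ : Cardinal.{u} | ℵ₀ ≤ κ ∧ ∀ x : X, ∃ 𝒰 : Set (Set X),
    #↥𝒰 ≤ κ ∧ (∀ U ∈ 𝒰, IsOpen U ∧ x ∈ U) ∧ ⋂₀ 𝒰 = ⋂₀ {U : Set X | IsOpen U ∧ x ∈ U}}

def IsScatteredSet {X : Type u} [TopologicalSpace X] (S : Set X) : Prop :=
  ∀ T ⊆ S, T.Nonempty → ∃ x ∈ T, ∃ U : Set X, IsOpen U ∧ U ∩ T = {x}

def IsKAnalytic (X : Type u) [TopologicalSpace X] : Prop :=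
  ∃ (P : Type u) (_ : TopologicalSpace P) (f : P → X),
    LindelofSpace P ∧ IsCechComplete P ∧ Continuous f ∧ Function.Surjective f

def IsAnalyticSpace (X : Type u) [TopologicalSpace X] : Prop :=
  ∃ (P : Type u) (_ : TopologicalSpace P), PolishSpace P ∧
    ∃ f : P → X, Continuous f ∧ Function.Surjective f

noncomputable def boundingNumber : Cardinal.{0} :=
  sInf {κ : Cardinal.{0} | ∃ B : Set (ℕ → ℕ), #↥B = κ ∧
    ∀ y : ℕ → ℕ, ∃ x ∈ B, {n : ℕ | ¬ x n ≤ y n}.Infinite}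

/-- A set on which some coordinate evaluation is injective is closed and discrete. -/
lemma aux_closed_discrete (D : Set (ℕ → ℕ)) (n : ℕ)
    (hinj : Set.InjOn (fun x => x n) D) : IsClosed D ∧ DiscreteTopology ↥D := by
  constructor
  · rw [← isOpen_compl_iff, isOpen_iff_mem_nhds]
    intro z hz
    by_cases h : ∃ d ∈ D, d n = z n
    · obtain ⟨d, hd, hdn⟩ := h
      have hdz : d ≠ z := fun h => hz (h ▸ hd)
      obtain ⟨m, hm⟩ : ∃ m, d m ≠ z m := Function.ne_iff.mp hdz
      have hopen : IsOpen {w : ℕ → ℕ | w n = z n ∧ w m = z m} := by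
        have h1 : IsOpen ((fun w : ℕ → ℕ => w n) ⁻¹' {z n}) :=
          (continuous_apply n).isOpen_preimage _ (isOpen_discrete _)
        have h2 : IsOpen ((fun w : ℕ → ℕ => w m) ⁻¹' {z m}) :=
          (continuous_apply m).isOpen_preimage _ (isOpen_discrete _)
        exact h1.inter h2
      refine mem_nhds_iff.mpr ⟨_, ?_, hopen, ⟨rfl, rfl⟩⟩
      intro w ⟨hw1, hw2⟩ hwD
      have : w = d := hinj hwD hd (by simp only [hw1, hdn])
      exact hm (this ▸ hw2)
    · push_neg at h
      have hopen : IsOpen ((fun w : ℕ → ℕ => w n) ⁻¹' {z n}) :=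
        (continuous_apply n).isOpen_preimage _ (isOpen_discrete _)
      refine mem_nhds_iff.mpr ⟨_, ?_, hopen, rfl⟩
      intro w hw hwD
      exact h w hwD hw
  · rw [discreteTopology_iff_isOpen_singleton]
    intro d
    have : {d} = (fun x : ↥D => (x : ℕ → ℕ) n) ⁻¹' {(d : ℕ → ℕ) n} := by
      ext x
      simp only [Set.mem_singleton_iff, Set.mem_preimage]
      constructor
      · rintro rfl; rfl
      · intro h
        exact Subtype.ext (hinj x.2 d.2 h)
    rw [this]
    exact (((continuous_apply n).comp continuous_subtype_val).isOpen_preimage _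
      (isOpen_discrete _))

theorem stmt16 (Y : Set (ℕ → ℕ))
    (hY : ∀ y : ℕ → ℕ, {x ∈ Y | ∀ n, x n ≤ y n}.Countable) :
    ∀ K : Set (Option ↥Y),
      @IsCompact _ (TopologicalSpace.generateFrom
        ({S : Set (Option ↥Y) | ∃ y : ↥Y, S = {Option.some y}} ∪
         {S : Set (Option ↥Y) | ∃ D : Set (ℕ → ℕ), D ⊆ Y ∧ IsClosed D ∧
            DiscreteTopology ↥D ∧
            S = {x : Option ↥Y | ∀ d : ↥Y, x = Option.some d → (d : ℕ → ℕ) ∉ D}})) K →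
      K.Countable := by
  letI tX : TopologicalSpace (Option ↥Y) := TopologicalSpace.generateFrom
        ({S : Set (Option ↥Y) | ∃ y : ↥Y, S = {Option.some y}} ∪
         {S : Set (Option ↥Y) | ∃ D : Set (ℕ → ℕ), D ⊆ Y ∧ IsClosed D ∧
            DiscreteTopology ↥D ∧
            S = {x : Option ↥Y | ∀ d : ↥Y, x = Option.some d → (d : ℕ → ℕ) ∉ D}})
  intro K hK
  -- Key: for every closed discrete D ⊆ Y, K meets D in a finite set
  have key : ∀ D : Set (ℕ → ℕ), D ⊆ Y → IsClosed D → DiscreteTopology ↥D →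
      {y : ↥Y | Option.some y ∈ K ∧ (y : ℕ → ℕ) ∈ D}.Finite := by
    intro D hDY hDc hDd
    set TD : Set (Option ↥Y) :=
      {x : Option ↥Y | ∀ d : ↥Y, x = Option.some d → (d : ℕ → ℕ) ∉ D} with hTD
    set U : Option {d : ↥Y // (d : ℕ → ℕ) ∈ D} → Set (Option ↥Y) :=
      fun i => match i with
        | none => TD
        | some d => {Option.some d.1} with hU
    have hopen : ∀ i, IsOpen (U i) := by
      rintro (_ | d)
      · exact TopologicalSpace.isOpen_generateFrom_of_mem
          (Or.inr ⟨D, hDY, hDc, hDd, rfl⟩)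
      · exact TopologicalSpace.isOpen_generateFrom_of_mem (Or.inl ⟨d.1, rfl⟩)
    have hcover : K ⊆ ⋃ i, U i := by
      rintro (_ | y) hx
      · exact Set.mem_iUnion.mpr ⟨none, by simp [hU, hTD]⟩
      · by_cases hy : (y : ℕ → ℕ) ∈ D
        · exact Set.mem_iUnion.mpr ⟨some ⟨y, hy⟩, rfl⟩
        · exact Set.mem_iUnion.mpr ⟨none, fun d hd => by
            rw [Option.some.injEq] at hd; exact hd ▸ hy⟩
    obtain ⟨s, hs⟩ := hK.elim_finite_subcover U hopen hcover
    set V : Option {d : ↥Y // (d : ℕ → ℕ) ∈ D} → Set ↥Y :=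
      fun i => match i with
        | none => ∅
        | some d => {d.1} with hV
    have hfin : (⋃ i ∈ s, V i).Finite :=
      s.finite_toSet.biUnion fun i _ => by
        rcases i with _ | d <;> simp [hV]
    refine hfin.subset ?_
    rintro y ⟨hyK, hyD⟩
    obtain ⟨i, his, hmem⟩ := Set.mem_iUnion₂.mp (hs hyK)
    rcases i with _ | d
    · exact absurd (hmem y rfl) (not_not.mpr hyD)
    · have : y = d.1 := by
        simpa [hU] using hmem
      exact Set.mem_biUnion his (by simp [hV, this])
  -- The trace of K on Y
  set A : Set (ℕ → ℕ) := {x | ∃ h : x ∈ Y, Option.some ⟨x, h⟩ ∈ K} with hA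
  -- each coordinate image of A is finite
  have hIfin : ∀ n, ((fun x => x n) '' A).Finite := by
    intro n
    by_contra hinf
    have hinf : ((fun x => x n) '' A).Infinite := hinf
    set e := hinf.natEmbedding with he
    have hsec : ∀ k : ℕ, ∃ x ∈ A, x n = (e k : ℕ) := fun k => (e k).2
    choose f hf1 hf2 using hsec
    have hfinj : Function.Injective f := by
      intro j k hjk
      have : (e j : ℕ) = (e k : ℕ) := by rw [← hf2 j, ← hf2 k, hjk]
      exact e.injective (Subtype.ext this)
    set D : Set (ℕ → ℕ) := Set.range f with hD
    have hDA : D ⊆ A := by rintro _ ⟨k, rfl⟩; exact hf1 k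
    have hDY : D ⊆ Y := fun x hx => (hDA hx).1
    have hinjD : Set.InjOn (fun x => x n) D := by
      rintro _ ⟨j, rfl⟩ _ ⟨k, rfl⟩ hfk
      have : (e j : ℕ) = (e k : ℕ) := by
        rw [← hf2 j, ← hf2 k]; exact hfk
      rw [hfinj (congrArg f (e.injective (Subtype.ext this)) ▸ rfl :
        f j = f j)]
      exact congrArg f (e.injective (Subtype.ext this))
    obtain ⟨hDc, hDd⟩ := aux_closed_discrete D n hinjD
    have hfinS := key D hDY hDc hDd
    have hDsub : D ⊆ Subtype.val '' {y : ↥Y | Option.some y ∈ K ∧ (y : ℕ → ℕ) ∈ D} := by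
      intro x hx
      obtain ⟨hxY, hxK⟩ := hDA hx
      exact ⟨⟨x, hxY⟩, ⟨hxK, hx⟩, rfl⟩
    exact (Set.infinite_range_of_injective hfinj) ((hfinS.image _).subset hDsub)
  -- A is bounded, hence countable
  set yb : ℕ → ℕ := fun n => sSup ((fun x => x n) '' A) with hyb
  have hAsub : A ⊆ {x ∈ Y | ∀ n, x n ≤ yb n} := by
    rintro x ⟨hxY, hxK⟩
    exact ⟨hxY, fun n => le_csSup (hIfin n).bddAbove ⟨x, ⟨hxY, hxK⟩, rfl⟩⟩
  have hAc : A.Countable := (hY yb).mono hAsub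
  -- conclude
  have hKsub : K ⊆ insert none (Option.some '' (Subtype.val ⁻¹' A)) := by
    rintro (_ | y) hx
    · exact Set.mem_insert _ _
    · exact Set.mem_insert_iff.mpr (Or.inr ⟨y, ⟨y.2, hx⟩, rfl⟩)
  exact (((hAc.preimage Subtype.val_injective).image _).insert none).mono hKsub
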